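/- Let $p$ be prime, $\ell \geq 0$, $n \geq 1$, and let $f : \mathbb{Z}_p^n \to \mathbb{C}$ be constant on cosets of $p^\ell \mathbb{Z}_p^n$, inducing $f' : (\mathbb{Z}/p^\ell\mathbb{Z})^n \to \mathbb{C}$. Then for any $u \in \mathbb{P}\mathbb{Z}_p^{n-1}$, the X-ray transform $f_u$ on $Q_u = \mathbb{Z}_p^n/\langle u \rangle$ is constant on cosets of $p^\ell Q_u$, and the induced function on $Q_u / p^\ell Q_u \cong (\mathbb{Z}/p^\ell\mathbb{Z})^{n-1}$ equals the discrete X-ray transform of $f'$ along $u \bmod p^\ell$: $f'_u(\bar x) = p^{-\ell} \sum_{t \in \mathbb{Z}/p^\ell\mathbb{Z}} f'(\bar x + t \bar u)$. -/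

import Mathlib

open MeasureTheory

noncomputable section

instance (p : ℕ) [Fact p.Prime] : MeasurableSpace ℤ_[p] := borel _
instance (p : ℕ) [Fact p.Prime] : BorelSpace ℤ_[p] := ⟨rfl⟩

/-- The Haar probability measure on `ℤ_p`. -/
def haarZp (p : ℕ) [Fact p.Prime] : Measure ℤ_[p] :=
  Measure.addHaarMeasure ⟨⟨Set.univ, isCompact_univ⟩, by simp⟩

/-- The X-ray transform of `f` along `u`, lifted to `ℤ_p^n` (being invariant under
translation by `u`, it descends to the quotient `Q_u = ℤ_p^n/⟨u⟩`). -/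
def xray (p : ℕ) [Fact p.Prime] (n : ℕ) (f : (Fin n → ℤ_[p]) → ℂ)
    (u : Fin n → ℤ_[p]) (x : Fin n → ℤ_[p]) : ℂ :=
  ∫ t, f (x + t • u) ∂(haarZp p)

section Aux
open ENNReal
variable (p : ℕ) [Fact p.Prime]

lemma haarZp_univ : (haarZp p) Set.univ = 1 :=
  MeasureTheory.Measure.addHaarMeasure_self
    (K₀ := (⟨⟨Set.univ, isCompact_univ⟩, by simp⟩ : TopologicalSpace.PositiveCompacts ℤ_[p]))

instance : IsProbabilityMeasure (haarZp p) := ⟨haarZp_univ p⟩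

instance : (haarZp p).IsAddLeftInvariant := by unfold haarZp; infer_instance

lemma measurable_toZModPow (ℓ : ℕ) : Measurable (PadicInt.toZModPow (p := p) ℓ) := by
  apply measurable_to_countable
  intro y
  have : (PadicInt.toZModPow (p := p) ℓ) ⁻¹' {PadicInt.toZModPow ℓ y}
      = (fun t => t - y) ⁻¹' {z | ‖z‖ ≤ (p : ℝ) ^ (-(ℓ:ℤ))} := by
    ext t
    simp only [Set.mem_preimage, Set.mem_singleton_iff, Set.mem_setOf_eq,
      PadicInt.norm_le_pow_iff_mem_span_pow, ← PadicInt.ker_toZModPow, RingHom.mem_ker, map_sub,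
      sub_eq_zero]
  rw [this]
  exact (measurable_id.sub measurable_const)
    (isClosed_le (continuous_norm) continuous_const).measurableSet

lemma measure_fiber (ℓ : ℕ) (c : ZMod (p ^ ℓ)) :
    haarZp p (PadicInt.toZModPow ℓ ⁻¹' {c}) = ((p : ℝ≥0∞) ^ ℓ)⁻¹ := by
  have key : ∀ c : ZMod (p ^ ℓ), haarZp p (PadicInt.toZModPow ℓ ⁻¹' {c})
      = haarZp p (PadicInt.toZModPow ℓ ⁻¹' {(0 : ZMod (p ^ ℓ))}) := by
    intro c
    have hset : (PadicInt.toZModPow (p := p) ℓ) ⁻¹' {c}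
        = (fun t => (-(c.val : ℤ_[p])) + t) ⁻¹' (PadicInt.toZModPow ℓ ⁻¹' {(0 : ZMod (p ^ ℓ))}) := by
      have : NeZero (p ^ ℓ) := ⟨pow_ne_zero _ (Fact.out (p := p.Prime)).ne_zero⟩
      have hc : PadicInt.toZModPow (p := p) ℓ ((c.val : ℕ) : ℤ_[p]) = c := by
        rw [map_natCast]; exact ZMod.natCast_rightInverse c
      ext t
      simp only [Set.mem_preimage, Set.mem_singleton_iff, map_add, map_neg, hc,
        neg_add_eq_zero]
      exact eq_comm
    rw [hset, measure_preimage_add]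
  have hsum : ∑ c : ZMod (p ^ ℓ), haarZp p (PadicInt.toZModPow ℓ ⁻¹' {c}) = 1 := by
    have : NeZero (p ^ ℓ) := ⟨pow_ne_zero _ (Fact.out (p := p.Prime)).ne_zero⟩
    rw [← tsum_fintype (L := SummationFilter.unconditional _),
      ← measure_iUnion _ (fun c => measurable_toZModPow p ℓ (measurableSet_singleton c)),
      ← Set.preimage_iUnion]
    · simp [Set.iUnion_of_singleton, haarZp_univ]
    · intro a b hab
      simp only [Function.onFun, Set.disjoint_left, Set.mem_preimage, Set.mem_singleton_iff]
      rintro t rfl h; exact hab h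
  simp only [key] at hsum ⊢
  rw [Finset.sum_const] at hsum
  have hcard : (Finset.univ : Finset (ZMod (p ^ ℓ))).card = p ^ ℓ := by
    have : NeZero (p ^ ℓ) := ⟨pow_ne_zero _ (Fact.out (p := p.Prime)).ne_zero⟩
    simp [ZMod.card]
  rw [hcard, nsmul_eq_mul] at hsum
  have hp : ((p : ℝ≥0∞) ^ ℓ) ≠ 0 := pow_ne_zero _ (by exact_mod_cast (Fact.out (p := p.Prime)).ne_zero)
  have hpt : ((p : ℝ≥0∞) ^ ℓ) ≠ ⊤ := by
    exact_mod_cast ENNReal.natCast_ne_top (p ^ ℓ)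
  have := ENNReal.eq_inv_of_mul_eq_one_left (a := ((p:ℝ≥0∞) ^ ℓ))
    (b := haarZp p (PadicInt.toZModPow ℓ ⁻¹' {(0 : ZMod (p ^ ℓ))})) (by push_cast at hsum ⊢; exact hsum)
  rw [this, inv_inv]

lemma integral_comp_toZModPow (ℓ : ℕ) (g : ZMod (p ^ ℓ) → ℂ) :
    ∫ t, g (PadicInt.toZModPow ℓ t) ∂(haarZp p) = ((p : ℝ) ^ ℓ)⁻¹ • ∑ c, g c := by
  have hmeas : ∀ c : ZMod (p ^ ℓ), MeasurableSet (PadicInt.toZModPow (p := p) ℓ ⁻¹' {c}) :=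
    fun c => measurable_toZModPow p ℓ (measurableSet_singleton c)
  have hfun : (fun t => g (PadicInt.toZModPow ℓ t))
      = fun t => ∑ c : ZMod (p ^ ℓ),
        (PadicInt.toZModPow (p := p) ℓ ⁻¹' {c}).indicator (fun _ => g c) t := by
    funext t
    rw [Finset.sum_eq_single (PadicInt.toZModPow ℓ t)]
    · simp [Set.indicator_apply]
    · intro c _ hc
      simp [Set.indicator_apply, Ne.symm hc]
    · simp
  rw [hfun, integral_finset_sum _ (fun c _ =>
    (integrable_const (g c)).indicator (hmeas c))]
  rw [Finset.smul_sum]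
  refine Finset.sum_congr rfl fun c _ => ?_
  rw [integral_indicator_const _ (hmeas c), measureReal_def, measure_fiber]
  simp [ENNReal.toReal_inv]

lemma xray_eq (n ℓ : ℕ) (f : (Fin n → ℤ_[p]) → ℂ) (f' : (Fin n → ZMod (p ^ ℓ)) → ℂ)
    (hf : ∀ x, f x = f' (fun i => PadicInt.toZModPow ℓ (x i)))
    (u : Fin n → ℤ_[p]) (x : Fin n → ℤ_[p]) :
    xray p n f u x = ((p : ℝ) ^ ℓ)⁻¹ • ∑ c : ZMod (p ^ ℓ),
      f' (fun i => PadicInt.toZModPow ℓ (x i) + c * PadicInt.toZModPow ℓ (u i)) := by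
  have : ∀ t : ℤ_[p], f (x + t • u)
      = (fun c : ZMod (p ^ ℓ) => f' (fun i => PadicInt.toZModPow ℓ (x i)
          + c * PadicInt.toZModPow ℓ (u i))) (PadicInt.toZModPow ℓ t) := by
    intro t
    rw [hf]
    simp [Pi.add_apply, Pi.smul_apply, smul_eq_mul, map_add, map_mul]
  unfold xray
  simp_rw [this]
  exact integral_comp_toZModPow p ℓ (fun c => f' (fun i =>
    PadicInt.toZModPow ℓ (x i) + c * PadicInt.toZModPow ℓ (u i)))

end Aux

/-- If `f : ℤ_p^n → ℂ` is constant on cosets of `p^ℓ ℤ_p^n`, inducing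
`f' : (ℤ/p^ℓℤ)^n → ℂ`, then for `u ∈ ℙℤ_p^{n-1}` the X-ray transform `f_u` is constant
on cosets of `p^ℓ Q_u` (lifted: constant on cosets of `p^ℓ ℤ_p^n + ℤ_p u`), and the
induced function on `Q_u/p^ℓ Q_u ≅ (ℤ/p^ℓℤ)^{n-1}` is the discrete X-ray transform of
`f'` along `u mod p^ℓ`: `f'_u(x̄) = p^{-ℓ} ∑_{t ∈ ℤ/p^ℓℤ} f'(x̄ + t ū)`. -/
theorem xray_locally_constant (p : ℕ) [Fact p.Prime] (n ℓ : ℕ) (hn : 1 ≤ n)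
    (f : (Fin n → ℤ_[p]) → ℂ) (f' : (Fin n → ZMod (p ^ ℓ)) → ℂ)
    (hf : ∀ x, f x = f' (fun i => PadicInt.toZModPow ℓ (x i)))
    (u : Fin n → ℤ_[p]) (hu : ∃ i, IsUnit (u i)) :
    (∀ x y : Fin n → ℤ_[p],
      (∃ s : ℤ_[p], ∀ i, (p : ℤ_[p]) ^ ℓ ∣ (x i - y i - s * u i)) →
        xray p n f u x = xray p n f u y) ∧
    (∀ x : Fin n → ℤ_[p],
      xray p n f u x = (1 / ((p : ℂ) ^ ℓ)) *
        ∑ t : Fin (p ^ ℓ),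
          f' (fun i => PadicInt.toZModPow ℓ (x i) +
            ((t : ℕ) : ZMod (p ^ ℓ)) * PadicInt.toZModPow ℓ (u i))) := by
  have : NeZero (p ^ ℓ) := ⟨pow_ne_zero _ (Fact.out (p := p.Prime)).ne_zero⟩
  constructor
  · rintro x y ⟨s, hs⟩
    have hxy : ∀ i, PadicInt.toZModPow ℓ (x i)
        = PadicInt.toZModPow ℓ (y i) + PadicInt.toZModPow ℓ s * PadicInt.toZModPow ℓ (u i) := by
      intro i
      have h0 : PadicInt.toZModPow ℓ (x i - y i - s * u i) = 0 := by
        rw [← RingHom.mem_ker, PadicInt.ker_toZModPow, Ideal.mem_span_singleton]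
        exact hs i
      rw [map_sub, map_sub, map_mul, sub_sub, sub_eq_zero] at h0
      rw [h0]
    rw [xray_eq p n ℓ f f' hf u x, xray_eq p n ℓ f f' hf u y]
    congr 1
    simp_rw [hxy]
    conv_rhs => rw [← Equiv.sum_comp (Equiv.addLeft (PadicInt.toZModPow ℓ s))]
    refine Finset.sum_congr rfl fun c _ => ?_
    congr 1; funext i
    simp [Equiv.coe_addLeft]
    ring
  · intro x
    rw [xray_eq p n ℓ f f' hf u x]
    have hbij : Function.Bijective (fun t : Fin (p ^ ℓ) => ((t : ℕ) : ZMod (p ^ ℓ))) := by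
      rw [Fintype.bijective_iff_injective_and_card]
      refine ⟨fun a b hab => ?_, by simp [ZMod.card]⟩
      have := congrArg ZMod.val hab
      rwa [ZMod.val_cast_of_lt a.isLt, ZMod.val_cast_of_lt b.isLt, ← Fin.ext_iff] at this
    rw [← Fintype.sum_bijective _ hbij _ _ (fun t => rfl)]
    rw [Complex.real_smul]
    push_cast
    ring

end
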